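/- Under the uniform arrival distribution on [0, t_b], if t_b < d(1/v_w - 1/v_b), then the expected travel time E(t_w) is strictly decreasing on [0, t_b]; in particular E(t_b) < E(0) = d/v_w, so it is always optimal to wait for the bus. -/

import Mathlib

theorem stmt_13 (d v_w v_b t_b : ℝ) (hd : 0 < d) (hvw : 0 < v_w) (hvb : v_w < v_b)
    (htb : 0 < t_b) (h : t_b < d * (1 / v_w - 1 / v_b)) :
    StrictAntiOn (fun t_w : ℝ =>
        -t_w ^ 2 / (2 * t_b) + (d * (1 / v_b - 1 / v_w) / t_b + 1) * t_w + d / v_w)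
      (Set.Icc 0 t_b) ∧
    (-t_b ^ 2 / (2 * t_b) + (d * (1 / v_b - 1 / v_w) / t_b + 1) * t_b + d / v_w
        < d / v_w) := by
  have hkey : d * (1 / v_b - 1 / v_w) < -t_b := by nlinarith
  set c : ℝ := d * (1 / v_b - 1 / v_w) / t_b + 1 with hcdef
  have hc : c < 0 := by
    rw [hcdef, div_add' _ _ _ (ne_of_gt htb)]
    apply div_neg_of_neg_of_pos _ htb
    linarith
  have hcm : c * t_b = d * (1 / v_b - 1 / v_w) + t_b := by
    rw [hcdef]; field_simp
  have hinv : (0:ℝ) < (2 * t_b)⁻¹ := by positivity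
  constructor
  · intro x hx y hy hxy
    simp only [Set.mem_Icc] at hx hy
    simp only [div_eq_mul_inv]
    nlinarith [mul_nonneg (mul_nonneg (by linarith [hx.1, hy.1] : (0:ℝ) ≤ x + y)
        (le_of_lt (sub_pos.mpr hxy))) (le_of_lt hinv),
      mul_neg_of_neg_of_pos hc (sub_pos.mpr hxy)]
  · rw [hcm]
    have h2 : -t_b ^ 2 / (2 * t_b) = -t_b / 2 := by
      rw [div_eq_div_iff (by positivity) (by norm_num : (2:ℝ) ≠ 0)]; ring
    rw [h2]; linarith
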